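/- Let p be a prime number, let R be a commutative ring, and let A be a commutative R-algebra of characteristic p (i.e. p · 1 = 0 in A). If D : A → A is an R-linear derivation of A, then the p-fold iterate D^p (the composition of D with itself p times) is again an R-linear derivation of A; in particular it satisfies the Leibniz rule D^p(ab) = a · D^p(b) + D^p(a) · b for all a, b ∈ A. -/

import Mathlib

lemma charP_module_end (R M : Type*) [Semiring R] [AddCommMonoid M] [Module R M] (p : ℕ)
    (h : ∀ n : ℕ, (∀ x : M, n • x = 0) ↔ p ∣ n) : CharP (Module.End R M) p := by
  constructor
  intro n
  rw [← h n]
  constructor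
  · intro hn x
    have := LinearMap.congr_fun hn x
    simpa [Module.End.natCast_apply] using this
  · intro hn
    ext x
    simpa [Module.End.natCast_apply] using hn x




/-- If `A` is a commutative `R`-algebra of characteristic `p` (`p` prime)
and `D : A → A` is an `R`-linear derivation, then the `p`-fold iterate `D^[p]` is again an
`R`-linear derivation of `A`; in particular it satisfies the Leibniz rule. -/
theorem stmt5 (p : ℕ) [Fact p.Prime] (R A : Type*) [CommRing R] [CommRing A] [Algebra R A]
    [CharP A p] (D : Derivation R A A) :
    ∃ D' : Derivation R A A, (⇑D' = (⇑D)^[p]) ∧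
      ∀ a b : A, (⇑D)^[p] (a * b) = a * (⇑D)^[p] b + (⇑D)^[p] a * b := by
  classical
  set E := Module.End R A with hE
  have hA : ∀ n : ℕ, (∀ x : A, n • x = 0) ↔ p ∣ n := by
    intro n
    constructor
    · intro hx
      have := hx 1
      rw [nsmul_eq_mul, mul_one] at this
      exact (CharP.cast_eq_zero_iff A p n).mp this
    · intro hn x
      rw [nsmul_eq_mul, (CharP.cast_eq_zero_iff A p n).mpr hn, zero_mul]
  haveI instE : CharP E p := charP_module_end R A p hA
  haveI : CharP (Module.End R E) p := by
    refine charP_module_end R E p fun n => ⟨fun hf => ?_, fun hn f => ?_⟩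
    · have h0 := hf (1 : E)
      have h1 : ((n : ℕ) : E) = 0 := by
        rw [show ((n : ℕ) : E) = n • (1 : E) by rw [nsmul_eq_mul, mul_one]]
        exact h0
      exact (CharP.cast_eq_zero_iff E p n).mp h1
    · ext x
      show (n • f) x = 0
      rw [LinearMap.smul_apply]
      exact (hA n).mpr hn (f x)
  set d : E := D.toLinearMap with hd'
  set lD : Module.End R E := LinearMap.mulLeft R d with hlD
  set rD : Module.End R E := LinearMap.mulRight R d with hrD
  have hcomm : Commute lD rD := LinearMap.commute_mulLeft_right d d
  have step : ∀ a : A, (lD - rD) (LinearMap.mulLeft R a) = LinearMap.mulLeft R (D a) := by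
    intro a
    ext x
    simp only [LinearMap.sub_apply, hlD, hrD, LinearMap.mulLeft_apply, LinearMap.mulRight_apply,
      Module.End.mul_apply]
    show D (a * x) - a * D x = D a * x
    rw [D.leibniz]
    simp only [smul_eq_mul]
    ring
  have key : ∀ (n : ℕ) (a : A),
      ((lD - rD) ^ n) (LinearMap.mulLeft R a) = LinearMap.mulLeft R ((⇑D)^[n] a) := by
    intro n
    induction n with
    | zero => intro a; simp
    | succ n ih =>
      intro a
      rw [pow_succ', Module.End.mul_apply, ih, step, Function.iterate_succ_apply']
  have hdpow : ∀ (n : ℕ) (x : A), (d ^ n) x = (⇑D)^[n] x := fun n x => Module.End.pow_apply d n x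
  have hl : ∀ (a : A) (n : ℕ), (lD ^ n) (LinearMap.mulLeft R a) = d ^ n * LinearMap.mulLeft R a := by
    intro a n
    induction n with
    | zero => simp
    | succ n ih => rw [pow_succ', Module.End.mul_apply, ih, pow_succ', mul_assoc]; rfl
  have hr : ∀ (a : A) (n : ℕ), (rD ^ n) (LinearMap.mulLeft R a) = LinearMap.mulLeft R a * d ^ n := by
    intro a n
    induction n with
    | zero => simp
    | succ n ih => rw [pow_succ', Module.End.mul_apply, ih, pow_succ, ← mul_assoc]; rfl
  have main : ∀ a b : A, (⇑D)^[p] (a * b) = a * (⇑D)^[p] b + (⇑D)^[p] a * b := by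
    intro a b
    have hp := sub_pow_char_of_commute (R := Module.End R E) (p := p) hcomm
    have h1 := LinearMap.congr_fun (LinearMap.congr_fun hp (LinearMap.mulLeft R a)) b
    rw [key p a, LinearMap.sub_apply, hl, hr] at h1
    have h2 : (⇑D)^[p] a * b = (d ^ p) (a * b) - a * ((d ^ p) b) := h1
    rw [hdpow, hdpow] at h2
    linear_combination -h2
  have hone : (d ^ p) 1 = 0 := by
    obtain ⟨m, hm⟩ := Nat.exists_eq_succ_of_ne_zero (Fact.out : p.Prime).ne_zero
    rw [hdpow, hm, Function.iterate_succ_apply]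
    show (⇑D)^[m] (D 1) = 0
    rw [D.map_one_eq_zero]
    exact Function.iterate_fixed D.map_zero m
  refine ⟨⟨d ^ p, hone, ?_⟩, ?_, main⟩
  · intro a b
    show (d ^ p) (a * b) = a • (d ^ p) b + b • (d ^ p) a
    rw [hdpow, hdpow, hdpow, main a b, smul_eq_mul, smul_eq_mul]
    ring
  · ext x
    exact hdpow p x
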